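/- A graph G with type 1 and type 2 vertices is 1.5-orientable if and only if every induced subgraph G' of G satisfies m' ≤ n₁' + 2n₂', where m' is the number of edges and n₁', n₂' the number of type 1, type 2 vertices of G'. -/

import Mathlib

open SimpleGraph

variable {V : Type*}

/-- Number of type-1 vertices in a vertex set. -/
noncomputable def n1 (t1 : V → Prop) (S : Set V) : ℕ := {v ∈ S | t1 v}.ncard

/-- Number of type-2 vertices in a vertex set. -/
noncomputable def n2 (t1 : V → Prop) (S : Set V) : ℕ := {v ∈ S | ¬ t1 v}.ncard

/-- Number of edges of `G` with both endpoints in `S`. -/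
noncomputable def edgesIn (G : SimpleGraph V) (S : Set V) : ℕ :=
  {e ∈ G.edgeSet | ∀ v ∈ e, v ∈ S}.ncard

/-- Sparsity: every subgraph on `n' ≥ 2` vertices has at most
`n₁' + 2 n₂' + min 0 (n₁' - 3)` edges. -/
def Sparse (G : SimpleGraph V) (t1 : V → Prop) : Prop :=
  ∀ S : Set V, 2 ≤ S.ncard →
    (edgesIn G S : ℤ) ≤ (n1 t1 S : ℤ) + 2 * n2 t1 S + min 0 ((n1 t1 S : ℤ) - 3)

/-- Minimal rigidity: either one vertex, or sparse with exactly
`n₁ + 2 n₂ + min 0 (n₁ - 3)` edges. -/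
def MinRigid (G : SimpleGraph V) (t1 : V → Prop) : Prop :=
  Nat.card V = 1 ∨
    (Sparse G t1 ∧
      (G.edgeSet.ncard : ℤ) = (n1 t1 Set.univ : ℤ) + 2 * n2 t1 Set.univ +
        min 0 ((n1 t1 Set.univ : ℤ) - 3))

/-- Rigidity: contains a spanning minimally rigid subgraph. -/
def Rigid (G : SimpleGraph V) (t1 : V → Prop) : Prop :=
  ∃ H : SimpleGraph V, H ≤ G ∧ MinRigid H t1

/-- A rigid block: a vertex-induced rigid subgraph, identified with its vertex set. -/
def RigidBlock (G : SimpleGraph V) (t1 : V → Prop) (S : Set V) : Prop :=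
  Rigid (G.induce S) (fun v => t1 ↑v)

/-- 1.5-orientability: an orientation (choice of a head endpoint for each edge)
such that type-1 vertices have in-degree at most 1 and type-2 vertices have
in-degree at most 2. -/
def Orientable (G : SimpleGraph V) (t1 : V → Prop) : Prop :=
  ∃ f : G.edgeSet → V, (∀ e : G.edgeSet, f e ∈ (e : Sym2 V)) ∧
    ∀ v : V, (t1 v → {e : G.edgeSet | f e = v}.ncard ≤ 1) ∧
      {e : G.edgeSet | f e = v}.ncard ≤ 2

section Aux

variable [Fintype V]

open Classical in
/-- `edgesIn` as a card of a finset of edge-subtype elements. -/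
lemma edgesIn_eq_card (G : SimpleGraph V) (S : Set V) :
    edgesIn G S =
      (Finset.univ.filter (fun e : G.edgeSet => ∀ v ∈ (e : Sym2 V), v ∈ S)).card := by
  classical
  have himg : {e ∈ G.edgeSet | ∀ v ∈ e, v ∈ S} =
      Subtype.val '' {e : G.edgeSet | ∀ v ∈ (e : Sym2 V), v ∈ S} := by
    ext e
    constructor
    · rintro ⟨he, h⟩; exact ⟨⟨e, he⟩, h, rfl⟩
    · rintro ⟨⟨e, he⟩, h, rfl⟩; exact ⟨he, h⟩
  rw [edgesIn, himg, Set.ncard_image_of_injective _ Subtype.val_injective,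
    Set.ncard_eq_toFinset_card']
  congr 1
  ext e
  simp

open Classical in
lemma n1_eq_card (t1 : V → Prop) (S : Set V) :
    n1 t1 S = (S.toFinset.filter t1).card := by
  classical
  rw [n1, Set.ncard_eq_toFinset_card']
  congr 1
  ext v
  simp

open Classical in
lemma n2_eq_card (t1 : V → Prop) (S : Set V) :
    n2 t1 S = (S.toFinset.filter (fun v => ¬ t1 v)).card := by
  classical
  rw [n2, Set.ncard_eq_toFinset_card']
  congr 1
  ext v
  simp

open Classical in
/-- The capacity sum over a set equals `n1 + 2 * n2`. -/
lemma sum_cap (t1 : V → Prop) (S : Set V) :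
    ∑ v ∈ S.toFinset, (if t1 v then 1 else 2) = n1 t1 S + 2 * n2 t1 S := by
  classical
  rw [n1_eq_card, n2_eq_card, Finset.sum_ite]
  simp [Finset.sum_const, mul_comm]

end Aux

/-- A graph is 1.5-orientable iff every induced subgraph `G'` satisfies
`m' ≤ n₁' + 2 n₂'`. -/
theorem stmt5 {V : Type*} [Fintype V] (G : SimpleGraph V) (t1 : V → Prop) :
    Orientable G t1 ↔
      ∀ S : Set V, edgesIn G S ≤ n1 t1 S + 2 * n2 t1 S := by
  classical
  constructor
  · rintro ⟨f, hmem, hdeg⟩ S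
    rw [edgesIn_eq_card]
    -- each edge with both endpoints in S has its head in S
    have hsub : (Finset.univ.filter (fun e : G.edgeSet => ∀ v ∈ (e : Sym2 V), v ∈ S)) ⊆
        S.toFinset.biUnion (fun v => Finset.univ.filter (fun e : G.edgeSet => f e = v)) := by
      intro e he
      simp only [Finset.mem_filter, Finset.mem_univ, true_and] at he
      refine Finset.mem_biUnion.2 ⟨f e, ?_, ?_⟩
      · exact Set.mem_toFinset.2 (he _ (hmem e))
      · simp
    calc (Finset.univ.filter (fun e : G.edgeSet => ∀ v ∈ (e : Sym2 V), v ∈ S)).card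
        ≤ (S.toFinset.biUnion (fun v => Finset.univ.filter (fun e : G.edgeSet => f e = v))).card :=
          Finset.card_le_card hsub
      _ ≤ ∑ v ∈ S.toFinset, (Finset.univ.filter (fun e : G.edgeSet => f e = v)).card :=
          Finset.card_biUnion_le
      _ ≤ ∑ v ∈ S.toFinset, (if t1 v then 1 else 2) := by
          refine Finset.sum_le_sum fun v _ => ?_
          have hcard : (Finset.univ.filter (fun e : G.edgeSet => f e = v)).card
              = {e : G.edgeSet | f e = v}.ncard := by
            rw [Set.ncard_eq_toFinset_card']
            congr 1
            ext e
            simp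
          by_cases h : t1 v
      
          · simpa [h, hcard] using (hdeg v).1 h
          · simpa [h, hcard] using (hdeg v).2
      _ = n1 t1 S + 2 * n2 t1 S := sum_cap t1 S
  · intro hS
    -- Hall's theorem on slots
    set slots : G.edgeSet → Finset (V × Bool) := fun e =>
      Finset.univ.filter (fun p => p.1 ∈ (e : Sym2 V) ∧ (t1 p.1 → p.2 = false)) with hslots
    have hall : ∀ s : Finset G.edgeSet, s.card ≤ (s.biUnion slots).card := by
      intro s
      obtain ⟨S, hSdef⟩ : ∃ S : Set V, S = {v | ∃ e ∈ s, v ∈ (e : Sym2 V)} := ⟨_, rfl⟩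
      -- s.card ≤ edgesIn G S
      have h1 : s.card ≤ edgesIn G S := by
        rw [edgesIn_eq_card]
        refine Finset.card_le_card ?_
        intro e he
        simp only [Finset.mem_filter, Finset.mem_univ, true_and]
        exact fun v hv => hSdef ▸ ⟨e, he, hv⟩
      -- biUnion slots is the slot set of S
      have h2 : s.biUnion slots =
          Finset.univ.filter (fun p : V × Bool => p.1 ∈ S ∧ (t1 p.1 → p.2 = false)) := by
        ext p
        simp only [Finset.mem_biUnion, hslots, Finset.mem_filter, Finset.mem_univ, true_and,
          hSdef, Set.mem_setOf_eq]
        constructor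
        · rintro ⟨e, he, hp, ht⟩; exact ⟨⟨e, he, hp⟩, ht⟩
        · rintro ⟨⟨e, he, hp⟩, ht⟩; exact ⟨e, he, hp, ht⟩
      -- count the slot set of S
      have h3 : (Finset.univ.filter
            (fun p : V × Bool => p.1 ∈ S ∧ (t1 p.1 → p.2 = false))).card
          = n1 t1 S + 2 * n2 t1 S := by
        rw [← sum_cap t1 S]
        rw [Finset.card_eq_sum_card_fiberwise
          (f := fun p : V × Bool => p.1) (t := S.toFinset)
          (fun p hp => by
            simp only [Finset.mem_coe, Finset.mem_filter, Finset.mem_univ, true_and] at hp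
            simp only [Finset.mem_coe, Set.mem_toFinset]
            exact hp.1)]
        refine Finset.sum_congr (by ext v; simp) fun v hv => ?_
        have hvS : v ∈ S := Set.mem_toFinset.1 hv
        by_cases h : t1 v
        · have : (Finset.univ.filter
              (fun p : V × Bool => p.1 ∈ S ∧ (t1 p.1 → p.2 = false))).filter
              (fun p => p.1 = v) = {(v, false)} := by
            ext p
            simp only [Finset.mem_filter, Finset.mem_univ, true_and, Finset.mem_singleton]
            constructor
            · rintro ⟨⟨hp1, hp2⟩, rfl⟩
              exact Prod.ext rfl (hp2 h)
            · rintro rfl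
              exact ⟨⟨hvS, fun _ => rfl⟩, rfl⟩
          rw [this]
          simp [h]
        · have : (Finset.univ.filter
              (fun p : V × Bool => p.1 ∈ S ∧ (t1 p.1 → p.2 = false))).filter
              (fun p => p.1 = v) = {(v, false), (v, true)} := by
            ext p
            simp only [Finset.mem_filter, Finset.mem_univ, true_and, Finset.mem_insert,
              Finset.mem_singleton]
            constructor
            · rintro ⟨⟨hp1, hp2⟩, rfl⟩
              rcases Bool.eq_false_or_eq_true p.2 with hb | hb
              · right; exact Prod.ext rfl hb
              · left; exact Prod.ext rfl hb
            · rintro (rfl | rfl)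
              · exact ⟨⟨hvS, fun _ => rfl⟩, rfl⟩
              · exact ⟨⟨hvS, fun ht => absurd ht h⟩, rfl⟩
          rw [this]
          simp [h]
      rw [h2, h3]
      exact h1.trans (hS S)
    obtain ⟨f, hinj, hf⟩ := (Finset.all_card_le_biUnion_card_iff_exists_injective slots).1 hall
    refine ⟨fun e => (f e).1, fun e => ?_, fun v => ?_⟩
    · have := hf e
      simp only [hslots, Finset.mem_filter, Finset.mem_univ, true_and] at this
      exact this.1
    · -- in-degree bounds via injectivity into the slots of v
      have key : ∀ (T : Set (V × Bool)), ({p | p.1 = v ∧ (t1 p.1 → p.2 = false)} ⊆ T) →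
          {e : G.edgeSet | (f e).1 = v}.ncard ≤ T.ncard ∨ True := fun _ _ => Or.inr trivial
      have hle : ∀ (b : Prop), True := fun _ => trivial
      have himg : ∀ e : G.edgeSet, (f e).1 = v → f e ∈ ({p : V × Bool | p.1 = v ∧ (t1 v → p.2 = false)}) := by
        intro e he
        have := hf e
        simp only [hslots, Finset.mem_filter, Finset.mem_univ, true_and] at this
        exact ⟨he, fun ht => this.2 (he ▸ ht)⟩
      have hcard : {e : G.edgeSet | (f e).1 = v}.ncard
          ≤ ({p : V × Bool | p.1 = v ∧ (t1 v → p.2 = false)}).ncard := by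
        rw [show {e : G.edgeSet | (f e).1 = v}.ncard
            = (f '' {e : G.edgeSet | (f e).1 = v}).ncard from
          (Set.ncard_image_of_injective _ hinj).symm]
        refine Set.ncard_le_ncard ?_ (Set.toFinite _)
        rintro p ⟨e, he, rfl⟩
        exact himg e he
      constructor
      · intro ht
        refine hcard.trans ?_
        have : {p : V × Bool | p.1 = v ∧ (t1 v → p.2 = false)} ⊆ {(v, false)} := by
          rintro ⟨a, b⟩ ⟨rfl, hb⟩
          simp [show b = false from hb ht]
        calc ({p : V × Bool | p.1 = v ∧ (t1 v → p.2 = false)}).ncard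
            ≤ ({(v, false)} : Set (V × Bool)).ncard := Set.ncard_le_ncard this (Set.toFinite _)
          _ = 1 := Set.ncard_singleton _
      · refine hcard.trans ?_
        have : {p : V × Bool | p.1 = v ∧ (t1 v → p.2 = false)} ⊆ {(v, false), (v, true)} := by
          rintro ⟨a, b⟩ ⟨rfl, hb⟩
          rcases Bool.eq_false_or_eq_true b with h | h <;> simp [h]
        calc ({p : V × Bool | p.1 = v ∧ (t1 v → p.2 = false)}).ncard
            ≤ ({(v, false), (v, true)} : Set (V × Bool)).ncard :=
              Set.ncard_le_ncard this (Set.toFinite _)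
          _ ≤ 2 := (Set.ncard_insert_le _ _).trans (by simp)
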